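/- Let Λ be a lattice (full-rank ℤ-submodule) in a positive definite rational quadratic space (V,Q) with Q(Λ) ⊆ ℤ. Then the stabilizer Aut(Λ) = {g ∈ O(Q) : g(Λ) = Λ} is a finite group. -/

import Mathlib

open QuadraticMap Finset

/-- Key lemma: in a positive definite rational quadratic space, the set of points of a
lattice with a given value of `Q` is finite. -/
lemma finite_fiber
    (V : Type*) [AddCommGroup V] [Module ℚ V] [FiniteDimensional ℚ V]
    (Q : QuadraticForm ℚ V) (hQ : Q.PosDef)
    (n : ℕ) (b : Module.Basis (Fin n) ℚ V) (c : ℚ) :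
    {x : V | x ∈ Submodule.span ℤ (Set.range b) ∧ Q x = c}.Finite := by
  obtain ⟨w, ⟨e⟩⟩ := Q.equivalent_weightedSumSquares
  -- weights are positive
  have hw : ∀ i, 0 < w i := by
    intro i
    have h1 : Q (e.symm (Pi.single i 1)) = weightedSumSquares ℚ w (Pi.single i 1) :=
      e.symm.map_app _
    have h2 : weightedSumSquares ℚ w (Pi.single i 1) = w i := by
      simp [weightedSumSquares_apply, Pi.single_apply]
    have h3 : (Pi.single i 1 : Fin (Module.finrank ℚ V) → ℚ) ≠ 0 := by
      intro h
      have := congrFun h i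
      simp at this
    have h4 : e.symm (Pi.single i 1) ≠ 0 := by
      intro h
      apply h3
      have := congrArg e h
      simpa using this
    have := hQ _ h4
    rw [h1, h2] at this
    exact this
  -- coordinates matrix
  set A : Fin n → Fin (Module.finrank ℚ V) → ℚ := fun j i => b.repr (e.symm (Pi.single i 1)) j with hA
  have hx2 : ∀ x : V, x = ∑ i, e x i • e.symm (Pi.single i 1) := by
    intro x
    have h1 : (e x : Fin (Module.finrank ℚ V) → ℚ)
        = ∑ i, e x i • (Pi.single i 1 : Fin (Module.finrank ℚ V) → ℚ) := by
      ext j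
      simp [Pi.single_apply, Finset.sum_apply]
    calc x = e.symm (e x) := (e.symm_apply_apply x).symm
      _ = e.symm (∑ i, e x i • (Pi.single i 1 : Fin (Module.finrank ℚ V) → ℚ)) := by rw [← h1]
      _ = ∑ i, e x i • e.symm (Pi.single i 1) := by rw [map_sum]; simp [_root_.map_smul]
  have hrepr : ∀ x : V, ∀ j, b.repr x j = ∑ i, e x i * A j i := by
    intro x j
    conv_lhs => rw [hx2 x]
    rw [map_sum, Finsupp.coe_finset_sum, Finset.sum_apply]
    apply Finset.sum_congr rfl
    intro i _
    rw [_root_.map_smul]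
    simp [hA, smul_eq_mul]
  -- bound per coordinate
  set C : ℚ := ∑ i : Fin (Module.finrank ℚ V), c / w i with hC
  set D : Fin n → ℚ := fun j => (∑ i, A j i ^ 2) * C with hD
  have hbound : ∀ x ∈ {x : V | x ∈ Submodule.span ℤ (Set.range b) ∧ Q x = c},
      ∀ j, (b.repr x j) ^ 2 ≤ D j := by
    rintro x ⟨-, hx⟩ j
    have hy : ∑ i, w i * (e x i) ^ 2 = c := by
      have h1 : weightedSumSquares ℚ w (e x) = Q x := e.map_app x
      rw [weightedSumSquares_apply] at h1
      rw [← hx, ← h1]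
      apply Finset.sum_congr rfl
      intro i _
      rw [smul_eq_mul, pow_two]
    have hterm : ∀ i, (e x i) ^ 2 ≤ c / w i := by
      intro i
      rw [le_div_iff₀ (hw i), mul_comm]
      calc w i * (e x i) ^ 2 ≤ ∑ i, w i * (e x i) ^ 2 :=
            Finset.single_le_sum (fun i _ => mul_nonneg (hw i).le (sq_nonneg _))
              (Finset.mem_univ i)
        _ = c := hy
    have hsum : ∑ i, (e x i) ^ 2 ≤ C := Finset.sum_le_sum fun i _ => hterm i
    calc (b.repr x j) ^ 2 = (∑ i, e x i * A j i) ^ 2 := by rw [hrepr x j]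
      _ ≤ (∑ i, (e x i) ^ 2) * (∑ i, A j i ^ 2) :=
          Finset.sum_mul_sq_le_sq_mul_sq _ _ _
      _ ≤ C * (∑ i, A j i ^ 2) := by
          apply mul_le_mul_of_nonneg_right hsum
          exact Finset.sum_nonneg fun i _ => sq_nonneg _
      _ = D j := by rw [hD, mul_comm]
  -- integer bound
  set K : Fin n → ℤ := fun j => max ⌈D j⌉ 0 with hK
  -- the map to integer coordinates
  set F : V → (Fin n → ℤ) := fun x j => (b.repr x j).num with hF
  have hden : ∀ x ∈ {x : V | x ∈ Submodule.span ℤ (Set.range b) ∧ Q x = c},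
      ∀ j, ((F x j : ℤ) : ℚ) = b.repr x j := by
    rintro x ⟨hx, -⟩ j
    obtain ⟨k, hk⟩ := (b.mem_span_iff_repr_mem ℤ x).mp hx j
    simp only [algebraMap_int_eq, eq_intCast] at hk
    rw [hF]
    simp only [← hk, Rat.num_intCast]
  apply Set.Finite.of_finite_image (f := F)
  · apply Set.Finite.subset (Set.Finite.pi fun j => Set.finite_Icc (-(K j)) (K j))
    rintro m ⟨x, hx, rfl⟩
    intro j _
    simp only [Set.mem_Icc, ← abs_le]
    have h1 : ((F x j : ℤ) : ℚ) ^ 2 ≤ D j := by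
      rw [hden x hx j]; exact hbound x hx j
    by_cases h0 : F x j = 0
    · rw [h0]; simp [hK]
    · have h2 : (1 : ℤ) ≤ |F x j| := Int.one_le_abs h0
      have h3 : |F x j| ≤ (F x j) ^ 2 := by
        calc |F x j| = |F x j| * 1 := (mul_one _).symm
          _ ≤ |F x j| * |F x j| := by
              apply mul_le_mul_of_nonneg_left h2 (abs_nonneg _)
          _ = |F x j| ^ 2 := (pow_two _).symm
          _ = (F x j) ^ 2 := sq_abs _
      have h4 : ((F x j) ^ 2 : ℚ) ≤ (⌈D j⌉ : ℚ) := le_trans (by push_cast; exact h1) (Int.le_ceil _)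
      have h5 : (F x j) ^ 2 ≤ ⌈D j⌉ := by exact_mod_cast h4
      calc |F x j| ≤ (F x j) ^ 2 := h3
        _ ≤ ⌈D j⌉ := h5
        _ ≤ K j := le_max_left _ _
  · intro x hx y hy hxy
    apply b.repr.injective
    ext j
    have := congrFun hxy j
    have h1 := hden x hx j
    have h2 := hden y hy j
    rw [← h1, ← h2, this]

/-- The automorphism group of an integral lattice in a positive definite rational
quadratic space is finite. -/
theorem lattice_automorphism_group_finite
    (V : Type*) [AddCommGroup V] [Module ℚ V] [FiniteDimensional ℚ V]
    (Q : QuadraticForm ℚ V) (hQ : Q.PosDef)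
    (Λ : Submodule ℤ V) (n : ℕ) (b : Module.Basis (Fin n) ℚ V)
    (hΛ : Λ = Submodule.span ℤ (Set.range b))
    (hint : ∀ x ∈ Λ, ∃ m : ℤ, Q x = (m : ℚ)) :
    {g : V ≃ₗ[ℚ] V | (∀ x, Q (g x) = Q x) ∧
      (g '' (Λ : Set V) = (Λ : Set V))}.Finite := by
  set S : Fin n → Set V := fun i => {x : V | x ∈ Submodule.span ℤ (Set.range b) ∧ Q x = Q (b i)}
    with hS
  have hSfin : ∀ i, (S i).Finite := fun i => finite_fiber V Q hQ n b (Q (b i))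
  set F : (V ≃ₗ[ℚ] V) → (Fin n → V) := fun g i => g (b i) with hF
  apply Set.Finite.of_finite_image (f := F)
  · apply Set.Finite.subset (Set.Finite.pi hSfin)
    rintro v ⟨g, ⟨hgQ, hgΛ⟩, rfl⟩
    intro i _
    have hbΛ : b i ∈ Λ := by
      rw [hΛ]
      exact Submodule.subset_span ⟨i, rfl⟩
    have h1 : g (b i) ∈ (Λ : Set V) := by
      rw [← hgΛ]
      exact ⟨b i, hbΛ, rfl⟩
    constructor
    · rwa [← hΛ]
    · exact hgQ (b i)
  · intro g _ g' _ h
    apply LinearEquiv.toLinearMap_injective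
    apply b.ext
    intro i
    exact congrFun h i
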